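/- Let K be a convex body in ℝ^m. A pair (p,q) ∈ ∂K × ∂K is an antipodal pair if there exists a unit vector u and parallel supporting hyperplanes H_u, H_{-u} of K orthogonal to u with p ∈ H_u ∩ ∂K and q ∈ H_{-u} ∩ ∂K. A pair (p,q) ∈ ∂K × ∂K is a diametric pair if ‖q - p‖ = max{‖x - y‖ : x, y ∈ K, x - y parallel to q - p}. Then the set of antipodal pairs of K equals the set of diametric pairs of K. -/

import Mathlib

variable {m : ℕ}

/-- `(p, q)` is an antipodal pair of the convex body `K`: `p` and `q` lie on the boundary
of `K` and on the two parallel supporting hyperplanes of `K` orthogonal to some unit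
direction `u` (`p` on the one with outer normal `u`, `q` on the one with outer normal `-u`). -/
def IsAntipodalPair (K : Set (EuclideanSpace ℝ (Fin m)))
    (p q : EuclideanSpace ℝ (Fin m)) : Prop :=
  p ∈ frontier K ∧ q ∈ frontier K ∧
    ∃ u : EuclideanSpace ℝ (Fin m), ‖u‖ = 1 ∧
      (∀ x ∈ K, inner ℝ x u ≤ (inner ℝ p u : ℝ)) ∧
      (∀ x ∈ K, (inner ℝ q u : ℝ) ≤ inner ℝ x u)

/-- `(p, q)` is a diametric pair of the convex body `K`: `p` and `q` lie on the boundary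
of `K` and the chord `pq` has maximal length among all chords of `K` parallel to it,
the common direction being some unit vector `u`. -/
def IsDiametricPair (K : Set (EuclideanSpace ℝ (Fin m)))
    (p q : EuclideanSpace ℝ (Fin m)) : Prop :=
  p ∈ frontier K ∧ q ∈ frontier K ∧
    ∃ u : EuclideanSpace ℝ (Fin m), ‖u‖ = 1 ∧
      (∃ α : ℝ, q - p = α • u) ∧
      ∀ x ∈ K, ∀ y ∈ K, (∃ β : ℝ, x - y = β • u) → ‖x - y‖ ≤ ‖q - p‖

private lemma mem_closure_interior_aux {K : Set (EuclideanSpace ℝ (Fin m))}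
    (hKconv : Convex ℝ K) {z x : EuclideanSpace ℝ (Fin m)}
    (hz : z ∈ interior K) (hx : x ∈ K) : x ∈ closure (interior K) := by
  have h1 : Filter.Tendsto (fun n : ℕ => (1 / (n + 1) : ℝ)) Filter.atTop (nhds 0) :=
    tendsto_one_div_add_atTop_nhds_zero_nat
  have h2 : Filter.Tendsto (fun n : ℕ => x + (1 / (n + 1) : ℝ) • (z - x))
      Filter.atTop (nhds x) := by
    have := (h1.smul_const (z - x)).const_add x
    simpa using this
  refine mem_closure_of_tendsto h2 (Filter.Eventually.of_forall fun n => ?_)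
  refine hKconv.add_smul_sub_mem_interior hx hz ⟨?_, ?_⟩
  · positivity
  · rw [div_le_one (by positivity)]
    linarith [Nat.cast_nonneg (α := ℝ) n]

theorem antipodal_eq_diametric (K : Set (EuclideanSpace ℝ (Fin m)))
    (hKc : IsCompact K) (hKconv : Convex ℝ K) (hKint : (interior K).Nonempty)
    (p q : EuclideanSpace ℝ (Fin m)) :
    IsAntipodalPair K p q ↔ IsDiametricPair K p q := by
  have hKclosed : IsClosed K := hKc.isClosed
  have hfr : frontier K ⊆ K := by
    rw [hKclosed.frontier_eq]; exact Set.diff_subset.trans subset_rfl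
  obtain ⟨z, hz⟩ := hKint
  have hzK : z ∈ K := interior_subset hz
  obtain ⟨ε, hε, hball⟩ := Metric.isOpen_iff.1 isOpen_interior z hz
  constructor
  · rintro ⟨hp, hq, u, hu, hpu, hqu⟩
    have hpK : p ∈ K := hfr hp
    have hqK : q ∈ K := hfr hq
    -- c > 0
    set c : ℝ := inner ℝ p u - inner ℝ q u with hc
    have hz2 : z + (ε / 2) • u ∈ K := by
      refine interior_subset (hball ?_)
      rw [Metric.mem_ball, dist_eq_norm]
      simp only [add_sub_cancel_left, norm_smul, hu, Real.norm_eq_abs]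
      rw [abs_of_pos (by linarith)]; linarith
    have hcpos : 0 < c := by
      have h1 : (inner ℝ (z + (ε / 2) • u) u : ℝ) ≤ inner ℝ p u := hpu _ hz2
      have h2 : (inner ℝ q u : ℝ) ≤ inner ℝ z u := hqu _ hzK
      have h3 : (inner ℝ (z + (ε / 2) • u) u : ℝ) = inner ℝ z u + (ε / 2) := by
        rw [inner_add_left, real_inner_smul_left, real_inner_self_eq_norm_sq, hu]
        ring
      rw [h3] at h1
      simp only [hc]; linarith
    have hne : q - p ≠ 0 := by
      intro h
      rw [sub_eq_zero] at h
      rw [hc, h] at hcpos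
      simp at hcpos
    have hr : (0:ℝ) < ‖q - p‖ := norm_pos_iff.2 hne
    refine ⟨hp, hq, ‖q - p‖⁻¹ • (q - p), ?_, ⟨‖q - p‖, ?_⟩, ?_⟩
    · rw [norm_smul, norm_inv, norm_norm, inv_mul_cancel₀ hr.ne']
    · rw [smul_smul, mul_inv_cancel₀ hr.ne', one_smul]
    · rintro x hx y hy ⟨β, hβ⟩
      set v : EuclideanSpace ℝ (Fin m) := ‖q - p‖⁻¹ • (q - p) with hv
      have hvu : (inner ℝ v u : ℝ) = -c / ‖q - p‖ := by
        rw [hv, real_inner_smul_left, inner_sub_left, hc]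
        field_simp
        ring
      have hub : (inner ℝ (x - y) u : ℝ) ≤ c := by
        rw [inner_sub_left]
        have := hpu x hx; have := hqu y hy
        simp only [hc]; linarith
      have hlb : -c ≤ (inner ℝ (x - y) u : ℝ) := by
        rw [inner_sub_left]
        have := hpu y hy; have := hqu x hx
        simp only [hc]; linarith
      have hxyv : (inner ℝ (x - y) u : ℝ) = β * (-c / ‖q - p‖) := by
        rw [hβ, real_inner_smul_left, hvu]
      have habs : |β| * (c / ‖q - p‖) ≤ c := by
        have h1 : |β * (-c / ‖q - p‖)| ≤ c := abs_le.2 ⟨by rw [← hxyv]; exact hlb,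
          by rw [← hxyv]; exact hub⟩
        calc |β| * (c / ‖q - p‖) = |β * (-c / ‖q - p‖)| := by
              rw [abs_mul, abs_div, abs_neg, abs_of_pos hcpos, abs_of_pos hr]
          _ ≤ c := h1
      have hβle : |β| ≤ ‖q - p‖ := by
        by_contra h
        push_neg at h
        have : ‖q - p‖ * (c / ‖q - p‖) < |β| * (c / ‖q - p‖) :=
          mul_lt_mul_of_pos_right h (by positivity)
        rw [mul_div_cancel₀ _ hr.ne'] at this
        linarith
      calc ‖x - y‖ = |β| * ‖v‖ := by rw [hβ, norm_smul, Real.norm_eq_abs]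
        _ = |β| := by
            rw [hv, norm_smul, norm_inv, norm_norm, inv_mul_cancel₀ hr.ne', mul_one]
        _ ≤ ‖q - p‖ := hβle
  · rintro ⟨hp, hq, u, hu, ⟨α, hqp⟩, hmax⟩
    have hpK : p ∈ K := hfr hp
    have hqK : q ∈ K := hfr hq
    -- p ≠ q
    have hne : q - p ≠ 0 := by
      intro h0
      have hz2 : z + (ε / 2) • u ∈ K := by
        refine interior_subset (hball ?_)
        rw [Metric.mem_ball, dist_eq_norm]
        simp only [add_sub_cancel_left, norm_smul, hu, Real.norm_eq_abs]
        rw [abs_of_pos (by linarith)]; linarith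
      have := hmax _ hz2 z hzK ⟨ε / 2, by abel⟩
      rw [h0] at this
      simp only [norm_zero] at this
      have h3 : ‖z + (ε / 2) • u - z‖ = ε / 2 := by
        simp only [add_sub_cancel_left, norm_smul, hu, Real.norm_eq_abs]
        rw [abs_of_pos (by linarith)]; ring
      rw [h3] at this; linarith
    have hr : (0:ℝ) < ‖q - p‖ := norm_pos_iff.2 hne
    -- disjointness of interior K and K + (q - p)
    have hdisj : Disjoint (interior K) ((fun x => (q - p) + x) '' K) := by
      rw [Set.disjoint_left]
      rintro w hw ⟨y, hyK, hyw⟩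
      obtain ⟨ε', hε', hball'⟩ := Metric.isOpen_iff.1 isOpen_interior w hw
      set δ : ℝ := ε' / (2 * ‖q - p‖) with hδ
      have hδpos : 0 < δ := by positivity
      have hxK : w + δ • (q - p) ∈ K := by
        refine interior_subset (hball' ?_)
        rw [Metric.mem_ball, dist_eq_norm]
        simp only [add_sub_cancel_left, norm_smul, Real.norm_eq_abs,
          abs_of_pos hδpos]
        have hdm : δ * ‖q - p‖ = ε' / 2 := by rw [hδ]; field_simp
        nlinarith [hdm]
      have hchord : w + δ • (q - p) - y = ((1 + δ) * α) • u := by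
        have : w - y = q - p := by rw [← hyw]; simp
        calc w + δ • (q - p) - y = (w - y) + δ • (q - p) := by abel
          _ = (q - p) + δ • (q - p) := by rw [this]
          _ = (1 + δ) • (q - p) := by rw [add_smul, one_smul]
          _ = ((1 + δ) * α) • u := by rw [hqp, smul_smul]
      have hlen : ‖w + δ • (q - p) - y‖ = (1 + δ) * ‖q - p‖ := by
        have : w + δ • (q - p) - y = (1 + δ) • (q - p) := by
          have hwy : w - y = q - p := by rw [← hyw]; simp
          calc w + δ • (q - p) - y = (w - y) + δ • (q - p) := by abel
            _ = (q - p) + δ • (q - p) := by rw [hwy]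
            _ = (1 + δ) • (q - p) := by rw [add_smul, one_smul]
        rw [this, norm_smul, Real.norm_eq_abs, abs_of_pos (by linarith)]
      have := hmax _ hxK y hyK ⟨(1 + δ) * α, hchord⟩
      rw [hlen] at this
      nlinarith
    -- separation
    obtain ⟨f, c, hfc1, hfc2⟩ := geometric_hahn_banach_open hKconv.interior
      isOpen_interior (hKconv.translate (q - p)) hdisj
    -- f is bounded by c on all of K
    have hKle : ∀ x ∈ K, f x ≤ c := by
      intro x hx
      have hxcl : x ∈ closure (interior K) := mem_closure_interior_aux hKconv hz hx
      have hsub : closure (interior K) ⊆ {y | f y ≤ c} := by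
        refine closure_minimal ?_ (isClosed_le f.continuous continuous_const)
        intro y hy; exact (hfc1 y hy).le
      exact hsub hxcl
    have hKge : ∀ x ∈ K, c ≤ f x + f (q - p) := by
      intro x hx
      have := hfc2 ((q - p) + x) ⟨x, hx, rfl⟩
      rw [map_add] at this; linarith
    -- f p = c - f (q - p), f q = c
    have hfp : f p = c - f (q - p) := by
      have h1 : f q ≤ c := hKle q hqK
      have h2 : c ≤ f p + f (q - p) := hKge p hpK
      have h3 : f (q - p) = f q - f p := by rw [map_sub]
      rw [h3] at h2 ⊢; linarith
    have hfq : f q = c := by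
      have h3 : f (q - p) = f q - f p := by rw [map_sub]
      rw [h3] at hfp; linarith
    -- f ≠ 0
    have hfne : f ≠ 0 := by
      intro h
      have h1 := hfc1 z hz
      have h2 := hfc2 ((q - p) + z) ⟨z, hzK, rfl⟩
      rw [h] at h1 h2
      simp at h1 h2
      linarith
    set v : EuclideanSpace ℝ (Fin m) := (InnerProductSpace.toDual ℝ _).symm f with hv
    have hvinner : ∀ x : EuclideanSpace ℝ (Fin m), (inner ℝ x v : ℝ) = f x := by
      intro x
      rw [real_inner_comm, hv, InnerProductSpace.toDual_symm_apply]
    have hvne : v ≠ 0 := by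
      intro h
      apply hfne
      ext x
      have := hvinner x
      rw [h, inner_zero_right] at this
      simp [← this]
    have hvnorm : (0:ℝ) < ‖v‖ := norm_pos_iff.2 hvne
    refine ⟨hp, hq, -(‖v‖⁻¹ • v), ?_, ?_, ?_⟩
    · rw [norm_neg, norm_smul, norm_inv, norm_norm, inv_mul_cancel₀ hvnorm.ne']
    · intro x hx
      have h1 : c - f (q - p) ≤ f x := by have := hKge x hx; linarith
      have h2 : (inner ℝ x (-(‖v‖⁻¹ • v)) : ℝ) = -(‖v‖⁻¹ * f x) := by
        rw [inner_neg_right, real_inner_smul_right, hvinner]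
      have h3 : (inner ℝ p (-(‖v‖⁻¹ • v)) : ℝ) = -(‖v‖⁻¹ * f p) := by
        rw [inner_neg_right, real_inner_smul_right, hvinner]
      rw [h2, h3, hfp, neg_le_neg_iff]
      exact mul_le_mul_of_nonneg_left h1 (by positivity)
    · intro x hx
      have h1 : f x ≤ c := hKle x hx
      have h2 : (inner ℝ x (-(‖v‖⁻¹ • v)) : ℝ) = -(‖v‖⁻¹ * f x) := by
        rw [inner_neg_right, real_inner_smul_right, hvinner]
      have h3 : (inner ℝ q (-(‖v‖⁻¹ • v)) : ℝ) = -(‖v‖⁻¹ * f q) := by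
        rw [inner_neg_right, real_inner_smul_right, hvinner]
      rw [h2, h3, hfq, neg_le_neg_iff]
      exact mul_le_mul_of_nonneg_left h1 (by positivity)
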